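/- Let b ∈ (1/2, 3/2) and 0 ≤ X < 1. For ε ∈ (0,2) set a = 2−ε, C_k(ε) = 4^{−k}(a)_{2k}/((3/2)_k (b+1)_k) and F_k(ε) = ∑_{j≥0} (a+2k)_j (1/2)_j (b)_j / ((3/2+k)_j (b+1+k)_j j!) (a convergent series since its parametric excess is ε > 0). Then lim_{ε→0⁺} ε · ∑_{k≥0} C_k(ε) F_k(ε) (−X)^k = 2b/(4+X). -/

import Mathlib

/-- Pochhammer symbol (rising factorial) for a real argument. -/
noncomputable def poch (x : ℝ) (n : ℕ) : ℝ := (ascPochhammer ℝ n).eval x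

/-- The coefficients `C_k(ε) = 4^{−k}(a)_{2k}/((3/2)_k (b+1)_k)` with `a = 2−ε`. -/
noncomputable def coeffCeps (b ε : ℝ) (k : ℕ) : ℝ :=
  poch (2 - ε) (2 * k) / (4 ^ k * poch (3 / 2) k * poch (b + 1) k)

/-- The hypergeometric value `F_k(ε) = ₃F₂(2−ε+2k, 1/2, b; 3/2+k, b+1+k; 1)`. -/
noncomputable def seriesFeps (b ε : ℝ) (k : ℕ) : ℝ :=
  ∑' j : ℕ, poch (2 - ε + 2 * k) j * poch (1 / 2) j * poch b j /
    (poch (3 / 2 + (k : ℝ)) j * poch (b + 1 + (k : ℝ)) j * (Nat.factorial j : ℝ))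

open Filter Finset Real Topology


lemma poch_zero (x : ℝ) : poch x 0 = 1 := by simp [poch]

lemma poch_succ (x : ℝ) (n : ℕ) : poch x (n+1) = poch x n * (x + n) := by
  simp [poch, ascPochhammer_succ_eval]

lemma poch_succ_left (x : ℝ) (n : ℕ) : poch x (n+1) = x * poch (x+1) n := by
  simp [poch, ascPochhammer_succ_left, Polynomial.eval_mul, Polynomial.eval_comp]

lemma poch_prod (x : ℝ) (n : ℕ) : poch x n = ∏ i ∈ Finset.range n, (x + i) := by
  induction n with
  | zero => simp [poch_zero]
  | succ n ih => rw [poch_succ, ih, Finset.prod_range_succ]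

lemma poch_pos {x : ℝ} (hx : 0 < x) (n : ℕ) : 0 < poch x n := by
  rw [poch_prod]
  exact Finset.prod_pos (fun i _ => by positivity)

lemma poch_nonneg {x : ℝ} (hx : 0 ≤ x) (n : ℕ) : 0 ≤ poch x n := by
  rw [poch_prod]
  exact Finset.prod_nonneg (fun i _ => by positivity)

lemma poch_le_poch {x y : ℝ} (hx : 0 ≤ x) (hxy : x ≤ y) (n : ℕ) : poch x n ≤ poch y n := by
  rw [poch_prod, poch_prod]
  exact Finset.prod_le_prod (fun i _ => by positivity) (fun i _ => by linarith)

lemma poch_one (n : ℕ) : poch 1 n = (Nat.factorial n : ℝ) := by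
  induction n with
  | zero => simp [poch_zero]
  | succ n ih => rw [poch_succ, ih, Nat.factorial_succ]; push_cast; ring

lemma poch_two (n : ℕ) : poch 2 n = (Nat.factorial (n+1) : ℝ) := by
  induction n with
  | zero => simp [poch_zero]
  | succ n ih =>
      rw [poch_succ, ih]
      have : (n+1)+1 = (n+1)+1 := rfl
      rw [show n+1+1 = (n+1)+1 from rfl, Nat.factorial_succ (n+1)]
      push_cast; ring

lemma Gamma_poch {x : ℝ} (hx : 0 < x) (n : ℕ) : Real.Gamma (x + n) = poch x n * Real.Gamma x := by
  induction n with
  | zero => simp [poch_zero]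
  | succ n ih =>
      have h1 : x + (n+1:ℕ) = (x + n) + 1 := by push_cast; ring
      have h2 : x + (n:ℝ) ≠ 0 := by positivity
      rw [h1, Real.Gamma_add_one h2, ih, poch_succ]; ring


lemma log_le_inv (u : ℝ) (hu : 0 < u) : Real.log (1 + 1/u) ≤ 1/u := by
  have h : (0:ℝ) < 1 + 1/u := by positivity
  have := Real.log_le_sub_one_of_pos h
  linarith

lemma inv_le_log (u : ℝ) (hu : 0 < u) : 1/(u+1) ≤ Real.log (1 + 1/u) := by
  have h : (0:ℝ) < 1 + 1/u := by positivity
  have h2 : (0:ℝ) < (1 + 1/u)⁻¹ := by positivity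
  have h3 := Real.log_le_sub_one_of_pos h2
  rw [Real.log_inv] at h3
  have he : (1 + 1/u)⁻¹ = u/(u+1) := by field_simp
  rw [he] at h3
  have hq : u/(u+1) - 1 = -(1/(u+1)) := by field_simp; ring
  rw [hq] at h3
  linarith

lemma log_split (u : ℝ) (hu : 0 < u) : Real.log (u+1) = Real.log u + Real.log (1+1/u) := by
  rw [show u+1 = u*(1+1/u) by field_simp,
    Real.log_mul (ne_of_gt hu) (by positivity : (0:ℝ) < 1+1/u).ne']

lemma zsummable {ε : ℝ} (hε : 0 < ε) : Summable (fun j : ℕ => ((j:ℝ)+1) ^ (-1-ε)) := by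
  have h := Real.summable_nat_rpow_inv.mpr (show (1:ℝ) < 1+ε by linarith)
  have h2 := (summable_nat_add_iff (f := fun n : ℕ => (((n:ℝ)) ^ (1+ε))⁻¹) 1).mpr h
  apply h2.congr
  intro n
  push_cast
  rw [show (-1-ε) = -(1+ε) by ring, Real.rpow_neg (by positivity)]

lemma zeta_bounds {ε : ℝ} (hε : 0 < ε) :
    1 ≤ ε * ∑' j : ℕ, ((j:ℝ)+1) ^ (-1-ε) ∧ ε * ∑' j : ℕ, ((j:ℝ)+1) ^ (-1-ε) ≤ 1 + ε := by
  set f : ℕ → ℝ := fun n => ((n:ℝ)+1) ^ (-ε) with hf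
  set g : ℕ → ℝ := fun n => ((n:ℝ)+1) ^ (-1-ε) with hgdef
  have hfe : ∀ n : ℕ, f n = Real.exp (-(ε * Real.log ((n:ℝ)+1))) := by
    intro n
    show ((n:ℝ)+1) ^ (-ε) = _
    rw [Real.rpow_def_of_pos (by positivity)]; ring_nf
  have hge : ∀ n : ℕ, g n = Real.exp (-(ε * Real.log ((n:ℝ)+1))) / ((n:ℝ)+1) := by
    intro n
    show ((n:ℝ)+1) ^ (-1-ε) = _
    rw [Real.rpow_def_of_pos (by positivity),
      show Real.log ((n:ℝ)+1) * (-1-ε) = -(ε * Real.log ((n:ℝ)+1)) + (-Real.log ((n:ℝ)+1)) by ring,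
      Real.exp_add, Real.exp_neg (Real.log ((n:ℝ)+1)), Real.exp_log (by positivity)]
    ring
  have hdec : ∀ n : ℕ, f (n+1) ≤ f n := by
    intro n
    rw [hfe, hfe]
    apply Real.exp_le_exp.mpr
    have : Real.log ((n:ℝ)+1) ≤ Real.log (((n+1:ℕ):ℝ)+1) := by
      apply Real.log_le_log (by positivity); push_cast; linarith
    nlinarith [this]
  have htel : HasSum (fun n : ℕ => f n - f (n+1)) 1 := by
    have hnn : ∀ n : ℕ, 0 ≤ f n - f (n+1) := fun n => by linarith [hdec n]
    rw [hasSum_iff_tendsto_nat_of_nonneg hnn]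
    have hsum : ∀ N : ℕ, ∑ n ∈ Finset.range N, (f n - f (n+1)) = f 0 - f N := by
      intro N
      rw [Finset.sum_range_sub' (f := fun n => f n)]
    simp_rw [hsum]
    have hf0 : f 0 = 1 := by rw [hfe]; simp
    rw [hf0]
    have hfz : Tendsto f atTop (𝓝 0) := by
      have h1 : Tendsto (fun n : ℕ => ((n:ℝ)+1)) atTop atTop :=
        tendsto_atTop_add_const_right _ 1 tendsto_natCast_atTop_atTop
      exact (tendsto_rpow_neg_atTop hε).comp h1
    simpa using tendsto_const_nhds.sub hfz
  have key1 : ∀ n : ℕ, f n - f (n+1) ≤ ε * g n := by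
    intro n
    have hu0 : (0:ℝ) < (n:ℝ)+1 := by positivity
    set u : ℝ := (n:ℝ)+1 with hu
    have hdle : Real.log (1 + 1/u) ≤ 1/u := log_le_inv u hu0
    have hfn1 : f (n+1) = Real.exp (-(ε * Real.log u)) * Real.exp (-(ε * Real.log (1+1/u))) := by
      rw [hfe]
      push_cast
      rw [← Real.exp_add]
      congr 1
      rw [show (((n:ℝ)+1)+1) = u + 1 by rw [hu], log_split u hu0]
      ring
    have h1 : 1 - Real.exp (-(ε * Real.log (1+1/u))) ≤ ε * Real.log (1+1/u) := by
      have := Real.add_one_le_exp (-(ε * Real.log (1+1/u)))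
      linarith
    have h2 : ε * Real.log (1+1/u) ≤ ε * (1/u) :=
      mul_le_mul_of_nonneg_left hdle (le_of_lt hε)
    have hE : 0 < Real.exp (-(ε * Real.log u)) := Real.exp_pos _
    rw [hfe n, hge n, hfn1]
    calc Real.exp (-(ε * Real.log ((n:ℝ)+1))) - Real.exp (-(ε * Real.log u)) * Real.exp (-(ε * Real.log (1+1/u)))
        = Real.exp (-(ε * Real.log u)) * (1 - Real.exp (-(ε * Real.log (1+1/u)))) := by rw [hu]; ring
      _ ≤ Real.exp (-(ε * Real.log u)) * (ε * (1/u)) := by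
          apply mul_le_mul_of_nonneg_left _ (le_of_lt hE)
          linarith
      _ = ε * (Real.exp (-(ε * Real.log ((n:ℝ)+1))) / ((n:ℝ)+1)) := by rw [hu]; ring
  have key2 : ∀ n : ℕ, ε * g (n+1) ≤ f n - f (n+1) := by
    intro n
    have hu0 : (0:ℝ) < (n:ℝ)+1 := by positivity
    set u : ℝ := (n:ℝ)+1 with hu
    have hdge : 1/(u+1) ≤ Real.log (1 + 1/u) := inv_le_log u hu0
    have hfn : f n = Real.exp (-(ε * Real.log (u+1))) * Real.exp (ε * Real.log (1+1/u)) := by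
      rw [hfe]
      rw [← Real.exp_add]
      congr 1
      rw [show Real.log (u+1) = Real.log u + Real.log (1+1/u) from log_split u hu0]
      ring
    have hfn1 : f (n+1) = Real.exp (-(ε * Real.log (u+1))) := by
      rw [hfe]; push_cast; rw [hu]
    have hgn1 : g (n+1) = Real.exp (-(ε * Real.log (u+1))) / (u+1) := by
      rw [hge]; push_cast; rw [hu]
    have h1 : ε * Real.log (1+1/u) + 1 ≤ Real.exp (ε * Real.log (1+1/u)) :=
      Real.add_one_le_exp _
    have h2 : ε * (1/(u+1)) ≤ ε * Real.log (1+1/u) :=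
      mul_le_mul_of_nonneg_left hdge (le_of_lt hε)
    have hE : 0 < Real.exp (-(ε * Real.log (u+1))) := Real.exp_pos _
    rw [hfn, hfn1, hgn1]
    calc ε * (Real.exp (-(ε * Real.log (u+1))) / (u+1))
        = Real.exp (-(ε * Real.log (u+1))) * (ε * (1/(u+1))) := by ring
      _ ≤ Real.exp (-(ε * Real.log (u+1))) * (Real.exp (ε * Real.log (1+1/u)) - 1) := by
          apply mul_le_mul_of_nonneg_left _ (le_of_lt hE)
          linarith
      _ = Real.exp (-(ε * Real.log (u+1))) * Real.exp (ε * Real.log (1+1/u))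
          - Real.exp (-(ε * Real.log (u+1))) := by ring
  have hsumg : Summable g := zsummable hε
  constructor
  · have hle := Summable.tsum_le_tsum key1 htel.summable (hsumg.mul_left ε)
    rw [htel.tsum_eq, tsum_mul_left] at hle
    linarith
  · have hg1 : Summable (fun n : ℕ => g (n+1)) := (summable_nat_add_iff 1).mpr hsumg
    have hle := Summable.tsum_le_tsum key2 (hg1.mul_left ε) htel.summable
    rw [htel.tsum_eq, tsum_mul_left] at hle
    have hsplit := (Summable.sum_add_tsum_nat_add 1 hsumg).symm
    have hg0 : g 0 = 1 := by rw [hge]; norm_num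
    have hZg : ∑' (n:ℕ), g n = g 0 + ∑' (n:ℕ), g (n+1) := by
      rw [hsplit]
      simp [Finset.sum_range_one]
    rw [hZg, hg0]
    nlinarith [hle]


section Pi
variable {m ε : ℝ}

lemma factor_pos (hm : 2 ≤ m) (hε0 : 0 < ε) (hε1 : ε ≤ 1) (i : ℕ) :
    0 < 1 - ε/(m+(i:ℝ)) := by
  have h1 : (2:ℝ) ≤ m + i := by
    have : (0:ℝ) ≤ i := Nat.cast_nonneg i
    linarith
  have h2 : ε/(m+(i:ℝ)) < 1 := by
    rw [div_lt_one (by linarith)]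
    linarith
  linarith

lemma Pi_pos (hm : 2 ≤ m) (hε0 : 0 < ε) (hε1 : ε ≤ 1) (j : ℕ) :
    0 < ∏ i ∈ Finset.range j, (1 - ε/(m+(i:ℝ))) :=
  Finset.prod_pos (fun i _ => factor_pos hm hε0 hε1 i)

lemma Pi_le_one (hm : 2 ≤ m) (hε0 : 0 < ε) (hε1 : ε ≤ 1) (j : ℕ) :
    ∏ i ∈ Finset.range j, (1 - ε/(m+(i:ℝ))) ≤ 1 := by
  apply Finset.prod_le_one (fun i _ => (factor_pos hm hε0 hε1 i).le)
  intro i _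
  have h1 : (0:ℝ) < m + i := by
    have : (0:ℝ) ≤ i := Nat.cast_nonneg i
    linarith
  have : 0 ≤ ε/(m+(i:ℝ)) := by positivity
  linarith

lemma Pi_ub (hm : 2 ≤ m) (hε0 : 0 < ε) (hε1 : ε ≤ 1) (j : ℕ) :
    ∏ i ∈ Finset.range j, (1 - ε/(m+(i:ℝ)))
      ≤ Real.exp (ε * Real.log m) * ((j:ℝ)+1) ^ (-ε) := by
  have hm0 : (0:ℝ) < m := by linarith
  have hmi : ∀ i : ℕ, (0:ℝ) < m + i := fun i => by
    have : (0:ℝ) ≤ i := Nat.cast_nonneg i; linarith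
  -- step 2 : log (m+j) - log m ≤ ∑ 1/(m+i)
  have step2 : ∀ n : ℕ, Real.log (m+(n:ℝ)) - Real.log m ≤ ∑ i ∈ Finset.range n, 1/(m+(i:ℝ)) := by
    intro n
    induction n with
    | zero => simp
    | succ n ih =>
        rw [Finset.sum_range_succ]
        have h1 : Real.log (m+((n+1:ℕ):ℝ)) = Real.log (m+(n:ℝ)) + Real.log (1+1/(m+(n:ℝ))) := by
          push_cast
          rw [show m+((n:ℝ)+1) = (m+(n:ℝ))+1 by ring, log_split _ (hmi n)]
        have h2 : Real.log (1+1/(m+(n:ℝ))) ≤ 1/(m+(n:ℝ)) := log_le_inv _ (hmi n)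
        linarith
  -- step 1
  have step1 : ∏ i ∈ Finset.range j, (1 - ε/(m+(i:ℝ)))
      ≤ Real.exp (- (ε * ∑ i ∈ Finset.range j, 1/(m+(i:ℝ)))) := by
    rw [show - (ε * ∑ i ∈ Finset.range j, 1/(m+(i:ℝ)))
        = ∑ i ∈ Finset.range j, (-(ε/(m+(i:ℝ)))) by
      rw [Finset.mul_sum, ← Finset.sum_neg_distrib]
      apply Finset.sum_congr rfl; intro i _; field_simp]
    rw [Real.exp_sum]
    apply Finset.prod_le_prod (fun i _ => (factor_pos hm hε0 hε1 i).le)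
    intro i _
    have := Real.add_one_le_exp (-(ε/(m+(i:ℝ))))
    linarith
  have step2j := step2 j
  -- step 3
  calc ∏ i ∈ Finset.range j, (1 - ε/(m+(i:ℝ)))
      ≤ Real.exp (- (ε * ∑ i ∈ Finset.range j, 1/(m+(i:ℝ)))) := step1
    _ ≤ Real.exp (- (ε * (Real.log (m+(j:ℝ)) - Real.log m))) := by
        apply Real.exp_le_exp.mpr
        have := mul_le_mul_of_nonneg_left step2j hε0.le
        linarith
    _ ≤ Real.exp (ε * Real.log m) * ((j:ℝ)+1) ^ (-ε) := by
        rw [Real.rpow_def_of_pos (by positivity : (0:ℝ) < (j:ℝ)+1), ← Real.exp_add]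
        apply Real.exp_le_exp.mpr
        have hlog : Real.log ((j:ℝ)+1) ≤ Real.log (m+(j:ℝ)) := by
          apply Real.log_le_log (by positivity)
          linarith [Nat.cast_nonneg (α := ℝ) j]
        nlinarith [hlog, hε0.le]

lemma Pi_lb (hm : 2 ≤ m) (hε0 : 0 < ε) (hε1 : ε ≤ 1) (j : ℕ) :
    Real.exp (-ε) * ((j:ℝ)+1) ^ (-ε) ≤ ∏ i ∈ Finset.range j, (1 - ε/(m+(i:ℝ))) := by
  have hm1 : (1:ℝ) ≤ m - 1 := by linarith
  have hmi : ∀ i : ℕ, (0:ℝ) < m - 1 + i := fun i => by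
    have : (0:ℝ) ≤ i := Nat.cast_nonneg i; linarith
  -- step 1: each factor ≥ exp(-(ε/(m-1+i)))
  have step1 : ∀ i : ℕ, Real.exp (-(ε/(m-1+(i:ℝ)))) ≤ 1 - ε/(m+(i:ℝ)) := by
    intro i
    have hq := hmi i
    have hp : (0:ℝ) < m + i := by linarith
    have h1 := Real.add_one_le_exp (ε/(m-1+(i:ℝ)))
    have hkey : 1 ≤ (1 - ε/(m+(i:ℝ))) * Real.exp (ε/(m-1+(i:ℝ))) := by
      have h2 : (1 - ε/(m+(i:ℝ))) * (ε/(m-1+(i:ℝ)) + 1) ≥ 1 := by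
        rw [ge_iff_le, ← sub_nonneg]
        have expand : (1 - ε/(m+(i:ℝ))) * (ε/(m-1+(i:ℝ)) + 1) - 1
            = ε * ((1 - ε) / ((m+(i:ℝ)) * (m-1+(i:ℝ)))) := by
          field_simp
          ring
        rw [expand]
        exact mul_nonneg hε0.le (div_nonneg (by linarith) (by positivity))
      have h3 : 0 < 1 - ε/(m+(i:ℝ)) := factor_pos hm hε0 hε1 i
      calc (1:ℝ) ≤ (1 - ε/(m+(i:ℝ))) * (ε/(m-1+(i:ℝ)) + 1) := h2
        _ ≤ (1 - ε/(m+(i:ℝ))) * Real.exp (ε/(m-1+(i:ℝ))) := by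
            apply mul_le_mul_of_nonneg_left _ h3.le
            linarith
    rw [Real.exp_neg]
    rw [inv_le_iff_one_le_mul₀ (Real.exp_pos _)]
    linarith [mul_comm (1 - ε/(m+(i:ℝ))) (Real.exp (ε/(m-1+(i:ℝ))))]
  -- step 2
  have step2 : Real.exp (- (ε * ∑ i ∈ Finset.range j, 1/(m-1+(i:ℝ))))
      ≤ ∏ i ∈ Finset.range j, (1 - ε/(m+(i:ℝ))) := by
    rw [show - (ε * ∑ i ∈ Finset.range j, 1/(m-1+(i:ℝ)))
        = ∑ i ∈ Finset.range j, (-(ε/(m-1+(i:ℝ)))) by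
      rw [Finset.mul_sum, ← Finset.sum_neg_distrib]
      apply Finset.sum_congr rfl; intro i _; field_simp]
    rw [Real.exp_sum]
    exact Finset.prod_le_prod (fun i _ => (Real.exp_pos _).le) (fun i _ => step1 i)
  -- step 3 : ∑ 1/(m-1+i) ≤ 1 + log(m-1+j) - log(m-1)
  have step3 : ∀ n : ℕ, ∑ i ∈ Finset.range n, 1/(m-1+(i:ℝ))
      ≤ 1 + Real.log (m-1+(n:ℝ)) - Real.log (m-1) := by
    have Q : ∀ n : ℕ, ∑ i ∈ Finset.range (n+1), 1/(m-1+(i:ℝ))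
        ≤ 1/(m-1) + Real.log (m-1+(n:ℝ)) - Real.log (m-1) := by
      intro n
      induction n with
      | zero => simp
      | succ p ih =>
          rw [Finset.sum_range_succ]
          have hu := hmi p
          have h1 : 1/(m-1+(p:ℝ)+1) ≤ Real.log (1+1/(m-1+(p:ℝ))) := inv_le_log _ hu
          have h2 : Real.log (m-1+((p+1:ℕ):ℝ)) = Real.log (m-1+(p:ℝ)) + Real.log (1+1/(m-1+(p:ℝ))) := by
            push_cast
            rw [show m-1+((p:ℝ)+1) = (m-1+(p:ℝ))+1 by ring, log_split _ hu]
          push_cast at *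
          simp only [one_div] at h1 h2 ih ⊢
          ring_nf at h1 h2 ih ⊢
          linarith
    intro n
    match n with
    | 0 =>
        simp only [Finset.range_zero, Finset.sum_empty, Nat.cast_zero, add_zero]
        linarith [Real.log_nonneg hm1]
    | (p+1) =>
        have := Q p
        have hlogmono : Real.log (m-1+(p:ℝ)) ≤ Real.log (m-1+((p+1:ℕ):ℝ)) := by
          apply Real.log_le_log (hmi p)
          push_cast; linarith
        have hinv : 1/(m-1) ≤ 1 := by
          rw [div_le_one (by linarith)]; linarith
        linarith
  -- step 4
  calc Real.exp (-ε) * ((j:ℝ)+1) ^ (-ε)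
      ≤ Real.exp (- (ε * ∑ i ∈ Finset.range j, 1/(m-1+(i:ℝ)))) := by
        rw [Real.rpow_def_of_pos (by positivity : (0:ℝ) < (j:ℝ)+1), ← Real.exp_add]
        apply Real.exp_le_exp.mpr
        have h1 := step3 j
        have h2 : Real.log (m-1+(j:ℝ)) - Real.log (m-1) ≤ Real.log ((j:ℝ)+1) := by
          have hle : m-1+(j:ℝ) ≤ (m-1)*((j:ℝ)+1) := by
            have : (0:ℝ) ≤ j := Nat.cast_nonneg j
            nlinarith
          have := Real.log_le_log (hmi j) hle
          rw [Real.log_mul (by linarith) (by positivity)] at this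
          linarith
        nlinarith [hε0.le]
    _ ≤ ∏ i ∈ Finset.range j, (1 - ε/(m+(i:ℝ))) := step2
end Pi


lemma rpow_split (x ε : ℝ) (hx : 0 < x) : x^(-1-ε) = x⁻¹ * x^(-ε) := by
  rw [show (-1-ε) = (-1) + (-ε) by ring, Real.rpow_add hx, Real.rpow_neg_one]

lemma core {m A : ℝ} (hm : 2 ≤ m) {g : ℕ → ℝ} (hg0 : ∀ j, 0 ≤ g j)
    (hg1 : ∀ j : ℕ, ((j:ℝ)+1) * g j ≤ 1)
    (hA : Filter.Tendsto (fun j : ℕ => ((j:ℝ)+1) * g j) Filter.atTop (nhds A)) :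
    Filter.Tendsto (fun ε : ℝ => ε * ∑' j : ℕ, g j * ∏ i ∈ Finset.range j, (1 - ε/(m+(i:ℝ))))
      (nhdsWithin 0 (Set.Ioi 0)) (nhds A) := by
  have hA0 : 0 ≤ A := ge_of_tendsto' hA (fun j => mul_nonneg (by positivity) (hg0 j))
  have hm0 : (0:ℝ) < m := by linarith
  rw [Metric.tendsto_nhds]
  intro δ hδ
  have hθ : 0 < δ/4 := by linarith
  obtain ⟨J, hJ⟩ := (Metric.tendsto_atTop.mp hA) (δ/4) hθ
  set θ : ℝ := δ/4 with hθdef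
  set K : ℝ := ∑ j ∈ Finset.range J, g j with hK
  set A' : ℝ := max (A - θ) 0 with hA'
  have hK0 : 0 ≤ K := Finset.sum_nonneg (fun j _ => hg0 j)
  -- the two comparison functions
  set U : ℝ → ℝ := fun ε => ε*K + (A+θ)*Real.exp (ε*Real.log m)*(1+ε) with hU
  set W : ℝ → ℝ := fun ε => A' * Real.exp (-ε) * (1 - ε*(J:ℝ)) with hW
  have hUt : Filter.Tendsto U (nhdsWithin 0 (Set.Ioi 0)) (nhds (A+θ)) := by
    have hcont : Continuous U := by
      apply Continuous.add
      · exact (continuous_id.mul continuous_const)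
      · exact (continuous_const.mul ((continuous_id.mul continuous_const).rexp)).mul
          (continuous_const.add continuous_id)
    have := (hcont.tendsto 0).mono_left (nhdsWithin_le_nhds (s := Set.Ioi (0:ℝ)))
    simpa [hU] using this
  have hWt : Filter.Tendsto W (nhdsWithin 0 (Set.Ioi 0)) (nhds A') := by
    have hcont : Continuous W := by
      apply Continuous.mul
      · exact continuous_const.mul (continuous_neg.rexp)
      · exact continuous_const.sub (continuous_id.mul continuous_const)
    have := (hcont.tendsto 0).mono_left (nhdsWithin_le_nhds (s := Set.Ioi (0:ℝ)))
    simpa [hW] using this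
  have hUlt : A + θ < A + δ := by rw [hθdef]; linarith
  have hWgt : A - δ < A' := by
    rw [hA', hθdef]
    rcases le_total (A - δ/4) 0 with h | h
    · rw [max_eq_right h]; linarith
    · rw [max_eq_left h]; linarith
  have hUev := hUt.eventually_lt_const hUlt
  have hWev := hWt.eventually_const_lt hWgt
  have hmem : Set.Ioc (0:ℝ) 1 ∈ nhdsWithin (0:ℝ) (Set.Ioi 0) :=
    Ioc_mem_nhdsGT_of_mem ⟨le_refl 0, zero_lt_one⟩
  filter_upwards [hUev, hWev, hmem] with ε hUε hWε hεmem
  obtain ⟨hε0, hε1⟩ := hεmem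
  -- now the hard estimates
  set t : ℕ → ℝ := fun j => g j * ∏ i ∈ Finset.range j, (1 - ε/(m+(i:ℝ))) with ht
  have htnn : ∀ j, 0 ≤ t j := fun j => mul_nonneg (hg0 j) (Pi_pos hm hε0 hε1 j).le
  have hgle : ∀ j : ℕ, g j ≤ ((j:ℝ)+1)⁻¹ := by
    intro j
    have h1 : (0:ℝ) < (j:ℝ)+1 := by positivity
    rw [← mul_le_mul_iff_right₀ h1]
    calc ((j:ℝ)+1) * g j ≤ 1 := hg1 j
      _ = ((j:ℝ)+1) * ((j:ℝ)+1)⁻¹ := by field_simp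
  have ht_ub : ∀ j : ℕ, t j ≤ Real.exp (ε*Real.log m) * ((j:ℝ)+1)^(-1-ε) := by
    intro j
    rw [rpow_split _ _ (by positivity)]
    calc t j ≤ ((j:ℝ)+1)⁻¹ * (Real.exp (ε*Real.log m) * ((j:ℝ)+1)^(-ε)) := by
          apply mul_le_mul (hgle j) (Pi_ub hm hε0 hε1 j) (Pi_pos hm hε0 hε1 j).le (by positivity)
      _ = Real.exp (ε*Real.log m) * (((j:ℝ)+1)⁻¹ * ((j:ℝ)+1)^(-ε)) := by ring
  have hZsum := zsummable hε0
  have hBsum : Summable (fun j : ℕ => Real.exp (ε*Real.log m) * ((j:ℝ)+1)^(-1-ε)) :=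
    hZsum.mul_left _
  have htsum : Summable t := Summable.of_nonneg_of_le htnn ht_ub hBsum
  set Z : ℝ := ∑' j : ℕ, ((j:ℝ)+1) ^ (-1-ε) with hZ
  have hzb := zeta_bounds hε0
  -- head bounds
  have hheadt : ∑ j ∈ Finset.range J, t j ≤ K := by
    apply Finset.sum_le_sum
    intro j _
    calc t j ≤ g j * 1 := by
          apply mul_le_mul_of_nonneg_left (Pi_le_one hm hε0 hε1 j) (hg0 j)
      _ = g j := by ring
  have hheadt0 : 0 ≤ ∑ j ∈ Finset.range J, t j := Finset.sum_nonneg (fun j _ => htnn j)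
  have hsplitt := Summable.sum_add_tsum_nat_add J htsum
  have hsplitZ := Summable.sum_add_tsum_nat_add J hZsum
  have hheadZ_le : ∑ j ∈ Finset.range J, ((j:ℝ)+1) ^ (-1-ε) ≤ (J:ℝ) := by
    calc ∑ j ∈ Finset.range J, ((j:ℝ)+1) ^ (-1-ε) ≤ ∑ j ∈ Finset.range J, 1 := by
          apply Finset.sum_le_sum
          intro j _
          apply Real.rpow_le_one_of_one_le_of_nonpos (by linarith [Nat.cast_nonneg (α := ℝ) j])
          linarith
      _ = (J:ℝ) := by simp
  have hheadZ0 : 0 ≤ ∑ j ∈ Finset.range J, ((j:ℝ)+1) ^ (-1-ε) :=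
    Finset.sum_nonneg (fun j _ => (Real.rpow_pos_of_pos (by positivity) _).le)
  have htailsum : Summable (fun i : ℕ => t (i+J)) := (summable_nat_add_iff J).mpr htsum
  have htailZsum : Summable (fun i : ℕ => ((((i+J):ℕ):ℝ)+1) ^ (-1-ε)) := by
    have := (summable_nat_add_iff (f := fun j : ℕ => ((j:ℝ)+1) ^ (-1-ε)) J).mpr hZsum
    exact this
  -- tail upper bound
  have htail_ub : ∑' i : ℕ, t (i+J)
      ≤ (A+θ) * Real.exp (ε*Real.log m) * ∑' i : ℕ, ((((i+J):ℕ):ℝ)+1) ^ (-1-ε) := by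
    rw [← tsum_mul_left]
    apply Summable.tsum_le_tsum _ htailsum (htailZsum.mul_left _)
    intro i
    have hJi := hJ (i+J) (Nat.le_add_left J i)
    rw [Real.dist_eq, abs_lt] at hJi
    have hgub : g (i+J) ≤ (A+θ) * ((((i+J):ℕ):ℝ)+1)⁻¹ := by
      have h1 : (0:ℝ) < (((i+J):ℕ):ℝ)+1 := by positivity
      rw [← mul_le_mul_iff_right₀ h1]
      calc ((((i+J):ℕ):ℝ)+1) * g (i+J) ≤ A + θ := by linarith [hJi.2]
        _ = ((((i+J):ℕ):ℝ)+1) * ((A+θ) * ((((i+J):ℕ):ℝ)+1)⁻¹) := by field_simp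
    calc t (i+J) ≤ ((A+θ) * ((((i+J):ℕ):ℝ)+1)⁻¹) * (Real.exp (ε*Real.log m) * ((((i+J):ℕ):ℝ)+1)^(-ε)) := by
          apply mul_le_mul hgub (Pi_ub hm hε0 hε1 (i+J)) (Pi_pos hm hε0 hε1 (i+J)).le
          have : (0:ℝ) ≤ A + θ := by linarith
          positivity
      _ = (A+θ) * Real.exp (ε*Real.log m) * ((((i+J):ℕ):ℝ)+1)^(-1-ε) := by
          rw [rpow_split _ _ (by positivity : (0:ℝ) < (((i+J):ℕ):ℝ)+1)]
          ring
  -- tail lower bound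
  have htail_lb : A' * Real.exp (-ε) * ∑' i : ℕ, ((((i+J):ℕ):ℝ)+1) ^ (-1-ε)
      ≤ ∑' i : ℕ, t (i+J) := by
    rw [← tsum_mul_left]
    apply Summable.tsum_le_tsum _ (htailZsum.mul_left _) htailsum
    intro i
    have hJi := hJ (i+J) (Nat.le_add_left J i)
    rw [Real.dist_eq, abs_lt] at hJi
    have hglb : A' * ((((i+J):ℕ):ℝ)+1)⁻¹ ≤ g (i+J) := by
      have h1 : (0:ℝ) < (((i+J):ℕ):ℝ)+1 := by positivity
      rw [← mul_le_mul_iff_right₀ h1]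
      have h2 : A' ≤ ((((i+J):ℕ):ℝ)+1) * g (i+J) := by
        rw [hA']
        apply max_le (by linarith [hJi.1]) (mul_nonneg (by positivity) (hg0 _))
      calc ((((i+J):ℕ):ℝ)+1) * (A' * ((((i+J):ℕ):ℝ)+1)⁻¹) = A' := by field_simp
        _ ≤ ((((i+J):ℕ):ℝ)+1) * g (i+J) := h2
    have hA'0 : 0 ≤ A' := le_max_right _ _
    calc A' * Real.exp (-ε) * ((((i+J):ℕ):ℝ)+1)^(-1-ε)
        = (A' * ((((i+J):ℕ):ℝ)+1)⁻¹) * (Real.exp (-ε) * ((((i+J):ℕ):ℝ)+1)^(-ε)) := by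
          rw [rpow_split _ _ (by positivity : (0:ℝ) < (((i+J):ℕ):ℝ)+1)]
          ring
      _ ≤ g (i+J) * ∏ i' ∈ Finset.range (i+J), (1 - ε/(m+(i':ℝ))) := by
          apply mul_le_mul hglb (Pi_lb hm hε0 hε1 (i+J)) (by positivity) (hg0 _)
      _ = t (i+J) := rfl
  -- tail of Z bounds
  have htailZ_ub : ∑' i : ℕ, ((((i+J):ℕ):ℝ)+1) ^ (-1-ε) ≤ Z := by
    rw [hZ, ← hsplitZ]
    linarith
  have htailZ_lb : Z - (J:ℝ) ≤ ∑' i : ℕ, ((((i+J):ℕ):ℝ)+1) ^ (-1-ε) := by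
    rw [hZ, ← hsplitZ]
    linarith
  -- assemble upper estimate
  have hup : ε * ∑' j, t j ≤ U ε := by
    rw [← hsplitt]
    have h1 : ∑ j ∈ Finset.range J, t j + ∑' i, t (i+J)
        ≤ K + (A+θ) * Real.exp (ε*Real.log m) * Z := by
      have h2 : (A+θ) * Real.exp (ε*Real.log m) * ∑' i : ℕ, ((((i+J):ℕ):ℝ)+1) ^ (-1-ε)
          ≤ (A+θ) * Real.exp (ε*Real.log m) * Z := by
        apply mul_le_mul_of_nonneg_left htailZ_ub
        have : (0:ℝ) ≤ A + θ := by linarith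
        positivity
      linarith [htail_ub]
    calc ε * (∑ j ∈ Finset.range J, t j + ∑' i, t (i+J))
        ≤ ε * (K + (A+θ) * Real.exp (ε*Real.log m) * Z) := by
          apply mul_le_mul_of_nonneg_left h1 hε0.le
      _ = ε*K + (A+θ) * Real.exp (ε*Real.log m) * (ε*Z) := by ring
      _ ≤ ε*K + (A+θ) * Real.exp (ε*Real.log m) * (1+ε) := by
          apply add_le_add_right
          apply mul_le_mul_of_nonneg_left hzb.2
          have : (0:ℝ) ≤ A + θ := by linarith
          positivity
      _ = U ε := by rw [hU]
  -- assemble lower estimate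
  have hlow : W ε ≤ ε * ∑' j, t j := by
    rw [← hsplitt]
    have hA'0 : 0 ≤ A' := le_max_right _ _
    have h1 : A' * Real.exp (-ε) * (Z - (J:ℝ)) ≤ ∑' i, t (i+J) := by
      calc A' * Real.exp (-ε) * (Z - (J:ℝ))
          ≤ A' * Real.exp (-ε) * ∑' i : ℕ, ((((i+J):ℕ):ℝ)+1) ^ (-1-ε) := by
            apply mul_le_mul_of_nonneg_left htailZ_lb (by positivity)
        _ ≤ ∑' i, t (i+J) := htail_lb
    calc W ε = A' * Real.exp (-ε) * (1 - ε*(J:ℝ)) := by rw [hW]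
      _ ≤ A' * Real.exp (-ε) * (ε*Z - ε*(J:ℝ)) := by
          apply mul_le_mul_of_nonneg_left _ (by positivity)
          linarith [hzb.1]
      _ = ε * (A' * Real.exp (-ε) * (Z - (J:ℝ))) := by ring
      _ ≤ ε * ∑' i, t (i+J) := mul_le_mul_of_nonneg_left h1 hε0.le
      _ ≤ ε * (∑ j ∈ Finset.range J, t j + ∑' i, t (i+J)) := by
          apply mul_le_mul_of_nonneg_left _ hε0.le
          linarith
  rw [Real.dist_eq, abs_lt]
  constructor
  · linarith [hlow, hWε]
  · linarith [hup, hUε]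


lemma tendsto_poch_asym_aux {x : ℝ} (hx : 0 < x) :
    Tendsto (fun j : ℕ => poch x j * Real.Gamma x * (x + (j:ℝ)) / ((j:ℝ) ^ x * (Nat.factorial j : ℝ)))
      atTop (𝓝 1) := by
  have hΓ : 0 < Real.Gamma x := Real.Gamma_pos_of_pos hx
  have hgs := Real.GammaSeq_tendsto_Gamma x
  have h1 : Tendsto (fun j : ℕ => Real.Gamma x / Real.GammaSeq x j) atTop (𝓝 (Real.Gamma x / Real.Gamma x)) :=
    Tendsto.div tendsto_const_nhds hgs hΓ.ne'
  rw [div_self hΓ.ne'] at h1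
  apply h1.congr'
  filter_upwards [eventually_ge_atTop 1] with j hj
  have hj0 : (0:ℝ) < (j:ℝ) := by exact_mod_cast hj
  have hprod : ∏ i ∈ Finset.range (j+1), (x + (i:ℝ)) = poch x j * (x + (j:ℝ)) := by
    rw [← poch_succ, poch_prod]
  rw [Real.GammaSeq, hprod]
  have hpow : (0:ℝ) < (j:ℝ) ^ x := Real.rpow_pos_of_pos hj0 _
  have hfact : (0:ℝ) < (Nat.factorial j : ℝ) := by positivity
  have hxj : (0:ℝ) < x + (j:ℝ) := by positivity
  have hpoch : (0:ℝ) < poch x j := poch_pos hx j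
  field_simp

lemma tendsto_linear_ratio (c d : ℝ) (hd : 0 < d) :
    Tendsto (fun j : ℕ => (c+(j:ℝ))/(d+(j:ℝ))) atTop (𝓝 1) := by
  have h0 : Tendsto (fun j : ℕ => (d+(j:ℝ))) atTop atTop :=
    tendsto_atTop_add_const_left _ d tendsto_natCast_atTop_atTop
  have h1 : Tendsto (fun j : ℕ => (c-d) * (d+(j:ℝ))⁻¹) atTop (𝓝 ((c-d) * 0)) :=
    Tendsto.const_mul _ h0.inv_tendsto_atTop
  have h2 : Tendsto (fun j : ℕ => 1 + (c-d) * (d+(j:ℝ))⁻¹) atTop (𝓝 (1 + (c-d)*0)) :=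
    tendsto_const_nhds.add h1
  norm_num at h2
  apply h2.congr
  intro j
  have hdj : (0:ℝ) < d + j := by positivity
  field_simp
  ring

lemma abstract_id (p1 p2 p3 q1 q2 Γ1 Γ2 Γ3 G1 G2 E1 E2 E3 F1 f u A1 A2 A3 D1 D2 : ℝ)
    (hE1 : E1 ≠ 0) (hE2 : E2 ≠ 0) (hE3 : E3 ≠ 0) (hF1 : F1 ≠ 0) (hf : f ≠ 0)
    (hΓ1 : Γ1 ≠ 0) (hΓ2 : Γ2 ≠ 0) (hΓ3 : Γ3 ≠ 0) (hG1 : G1 ≠ 0) (hG2 : G2 ≠ 0)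
    (hA1 : A1 ≠ 0) (hA2 : A2 ≠ 0) (hA3 : A3 ≠ 0) (hD1 : D1 ≠ 0) (hD2 : D2 ≠ 0)
    (hq1 : q1 ≠ 0) (hq2 : q2 ≠ 0) :
    (p1*Γ1*A1/(E1*f)) * (p2*Γ2*A2/(E2*f)) * (p3*Γ3*A3/(E3*f)) /
      ((q1*G1*D1/(F1*f)) * (q2*G2*D2/((E1*E2*E3/F1)*f))) *
      (G1*G2/(Γ1*Γ2*Γ3)) * (u/A1 * (D1/A2) * (D2/A3))
    = u * (p1*p2*p3/(q1*q2*f)) := by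
  field_simp



noncomputable def Rf (x : ℝ) (j : ℕ) : ℝ :=
  poch x j * Real.Gamma x * (x + (j:ℝ)) / ((j:ℝ) ^ x * (Nat.factorial j : ℝ))

lemma tendsto_poch_asym {x : ℝ} (hx : 0 < x) : Tendsto (Rf x) atTop (𝓝 1) :=
  tendsto_poch_asym_aux hx


noncomputable def gfun (b : ℝ) (k : ℕ) (j : ℕ) : ℝ :=
  poch (2+2*(k:ℝ)) j * poch (1/2) j * poch b j /
    (poch (3/2+(k:ℝ)) j * poch (b+1+(k:ℝ)) j * (Nat.factorial j : ℝ))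

lemma gfun_nonneg (b : ℝ) (hb1 : 1/2 < b) (k j : ℕ) : 0 ≤ gfun b k j := by
  unfold gfun
  have h1 : (0:ℝ) < 2+2*(k:ℝ) := by positivity
  have h2 : (0:ℝ) < 3/2+(k:ℝ) := by positivity
  have h3 : (0:ℝ) < b := by linarith
  have h4 : (0:ℝ) < b+1+(k:ℝ) := by positivity
  have := poch_pos h1 j
  have := poch_pos (show (0:ℝ) < 1/2 by norm_num) j
  have := poch_pos h3 j
  have := poch_pos h2 j
  have := poch_pos h4 j
  have : (0:ℝ) < (Nat.factorial j : ℝ) := by positivity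
  positivity

lemma gfun_zero (b : ℝ) : gfun b k 0 = 1 := by
  unfold gfun
  simp [poch_zero]

lemma gfun_succ (b : ℝ) (hb1 : 1/2 < b) (k j : ℕ) :
    gfun b k (j+1) * ((3/2+(k:ℝ)+j) * (b+1+(k:ℝ)+j) * ((j:ℝ)+1))
      = gfun b k j * ((2+2*(k:ℝ)+j) * (1/2+(j:ℝ)) * (b+j)) := by
  unfold gfun
  rw [poch_succ, poch_succ, poch_succ, poch_succ, poch_succ, Nat.factorial_succ]
  push_cast
  have h2 : (0:ℝ) < 3/2+(k:ℝ) := by positivity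
  have h4 : (0:ℝ) < b+1+(k:ℝ) := by linarith [Nat.cast_nonneg (α := ℝ) k]
  have p2 : (0:ℝ) < poch (3/2+(k:ℝ)) j := poch_pos h2 j
  have p4 : (0:ℝ) < poch (b+1+(k:ℝ)) j := poch_pos h4 j
  have p5 : (0:ℝ) < (Nat.factorial j : ℝ) := by positivity
  have h2j : (0:ℝ) < 3/2+(k:ℝ)+j := by positivity
  have h4j : (0:ℝ) < b+1+(k:ℝ)+j := by positivity
  set P1 := poch (2+2*(k:ℝ)) j
  set P2 := poch (1/2:ℝ) j
  set P3 := poch b j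
  set Q1 := poch (3/2+(k:ℝ)) j
  set Q2 := poch (b+1+(k:ℝ)) j
  set Ft := (Nat.factorial j : ℝ)
  field_simp

lemma quartic (b K J : ℝ) (hb1 : 1/2 < b) (hb2 : b < 3/2) (hK : 0 ≤ K) (hJ : 0 ≤ J) :
    (J+2)*((2+2*K+J) * (1/2+J) * (b+J)) ≤ ((J+1)*(J+1))*((3/2+K+J) * (b+1+K+J)) := by
  have hs : (0:ℝ) ≤ 3/2 - b := by linarith
  have expand : ((J+1)*(J+1))*((3/2+K+J) * (b+1+K+J)) - (J+2)*((2+2*K+J) * (1/2+J) * (b+J))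
      = J^2*(K^2+(K+1)*(3/2-b)) + J*(2*K^2+K*(3*(3/2-b)+1/2)+(2*(3/2-b)+1/2))
        + (K^2+K*((3/2-b)+1)+((3/2-b)+b/2) ) := by ring
  nlinarith [sq_nonneg J, sq_nonneg K, mul_nonneg (sq_nonneg J) (mul_nonneg (sq_nonneg K) hs),
    mul_nonneg (sq_nonneg J) hs, mul_nonneg (mul_nonneg (sq_nonneg J) hK) hs,
    mul_nonneg hJ hs, mul_nonneg (mul_nonneg hJ hK) hs, mul_nonneg hJ (sq_nonneg K),
    mul_nonneg hK hs, mul_nonneg hJ hK, mul_nonneg (sq_nonneg J) (sq_nonneg K)]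

lemma gfun_h_le_one (b : ℝ) (hb1 : 1/2 < b) (hb2 : b < 3/2) (k : ℕ) :
    ∀ j : ℕ, ((j:ℝ)+1) * gfun b k j ≤ 1 := by
  have hdec : ∀ j : ℕ, (((j:ℝ)+1)+1) * gfun b k (j+1) ≤ ((j:ℝ)+1) * gfun b k j := by
    intro j
    have hK : (0:ℝ) ≤ (k:ℝ) := Nat.cast_nonneg k
    have hJ : (0:ℝ) ≤ (j:ℝ) := Nat.cast_nonneg j
    have hkey := quartic b (k:ℝ) (j:ℝ) hb1 hb2 hK hJ
    have hP : (0:ℝ) < (3/2+(k:ℝ)+j) * (b+1+(k:ℝ)+j) * ((j:ℝ)+1) := by positivity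
    have hg0 := gfun_nonneg b hb1 k j
    have hstep := gfun_succ b hb1 k j
    have h2 : (((j:ℝ)+1)+1) * (gfun b k (j+1) * ((3/2+(k:ℝ)+j) * (b+1+(k:ℝ)+j) * ((j:ℝ)+1)))
        ≤ (((j:ℝ)+1) * gfun b k j) * ((3/2+(k:ℝ)+j) * (b+1+(k:ℝ)+j) * ((j:ℝ)+1)) := by
      rw [hstep]
      calc (((j:ℝ)+1)+1) * (gfun b k j * ((2+2*(k:ℝ)+j) * (1/2+(j:ℝ)) * (b+j)))
          = gfun b k j * (((j:ℝ)+2)*((2+2*(k:ℝ)+j) * (1/2+(j:ℝ)) * (b+j))) := by ring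
        _ ≤ gfun b k j * ((((j:ℝ)+1)*((j:ℝ)+1))*((3/2+(k:ℝ)+j) * (b+1+(k:ℝ)+j))) :=
            mul_le_mul_of_nonneg_left hkey hg0
        _ = (((j:ℝ)+1) * gfun b k j) * ((3/2+(k:ℝ)+j) * (b+1+(k:ℝ)+j) * ((j:ℝ)+1)) := by ring
    have h3 := le_of_mul_le_mul_right (by
      calc ((((j:ℝ)+1)+1) * gfun b k (j+1)) * ((3/2+(k:ℝ)+j) * (b+1+(k:ℝ)+j) * ((j:ℝ)+1))
          = (((j:ℝ)+1)+1) * (gfun b k (j+1) * ((3/2+(k:ℝ)+j) * (b+1+(k:ℝ)+j) * ((j:ℝ)+1))) := by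
            ring
        _ ≤ (((j:ℝ)+1) * gfun b k j) * ((3/2+(k:ℝ)+j) * (b+1+(k:ℝ)+j) * ((j:ℝ)+1)) := h2) hP
    exact h3
  intro j
  induction j with
  | zero => rw [gfun_zero]; norm_num
  | succ n ih =>
      have := hdec n
      push_cast at this ⊢
      linarith

lemma Feps_eq (b ε : ℝ) (k : ℕ) :
    seriesFeps b ε k = ∑' j : ℕ, gfun b k j * ∏ i ∈ Finset.range j, (1 - ε/((2+2*(k:ℝ))+(i:ℝ))) := by
  unfold seriesFeps
  apply tsum_congr
  intro j
  have hne : ∀ i : ℕ, (2+2*(k:ℝ))+(i:ℝ) ≠ 0 := fun i => by positivity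
  have hshift : poch (2 - ε + 2*(k:ℝ)) j
      = poch (2+2*(k:ℝ)) j * ∏ i ∈ Finset.range j, (1 - ε/((2+2*(k:ℝ))+(i:ℝ))) := by
    induction j with
    | zero => simp [poch_zero]
    | succ n ih =>
        rw [poch_succ, poch_succ, ih, Finset.prod_range_succ]
        have h := hne n
        field_simp
        ring
    
  rw [show (2:ℝ) - ε + 2*(k:ℝ) = 2 - ε + 2*(k:ℝ) from rfl, hshift]
  unfold gfun
  ring


lemma tendsto_hA (b : ℝ) (hb1 : 1/2 < b) (hb2 : b < 3/2) (k : ℕ) :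
    Tendsto (fun j : ℕ => ((j:ℝ)+1) * gfun b k j) atTop
      (𝓝 (Real.Gamma (3/2+(k:ℝ)) * Real.Gamma (b+1+(k:ℝ)) /
        (Real.Gamma (2+2*(k:ℝ)) * Real.Gamma (1/2) * Real.Gamma b))) := by
  have hK : (0:ℝ) ≤ (k:ℝ) := Nat.cast_nonneg k
  have ha1 : (0:ℝ) < 2+2*(k:ℝ) := by linarith
  have ha2 : (0:ℝ) < (1/2:ℝ) := by norm_num
  have ha3 : (0:ℝ) < b := by linarith
  have hd1 : (0:ℝ) < 3/2+(k:ℝ) := by linarith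
  have hd2 : (0:ℝ) < b+1+(k:ℝ) := by linarith
  set AΓ : ℝ := Real.Gamma (3/2+(k:ℝ)) * Real.Gamma (b+1+(k:ℝ)) /
        (Real.Gamma (2+2*(k:ℝ)) * Real.Gamma (1/2) * Real.Gamma b) with hAΓ
  have hΦ : Tendsto (fun j : ℕ =>
      Rf (2+2*(k:ℝ)) j * Rf (1/2) j * Rf b j / (Rf (3/2+(k:ℝ)) j * Rf (b+1+(k:ℝ)) j) * AΓ *
        (((j:ℝ)+1)/((2+2*(k:ℝ))+(j:ℝ)) * ((3/2+(k:ℝ)+(j:ℝ))/((1/2)+(j:ℝ)))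
          * ((b+1+(k:ℝ)+(j:ℝ))/(b+(j:ℝ)))))
      atTop (𝓝 (1*1*1/(1*1)*AΓ*(1*1*1))) := by
    apply Tendsto.mul
    apply Tendsto.mul
    · exact Tendsto.div (((tendsto_poch_asym ha1).mul (tendsto_poch_asym ha2)).mul
        (tendsto_poch_asym ha3))
        ((tendsto_poch_asym hd1).mul (tendsto_poch_asym hd2)) (by norm_num)
    · exact tendsto_const_nhds
    · apply Tendsto.mul
      apply Tendsto.mul
      · exact (tendsto_linear_ratio 1 (2+2*(k:ℝ)) ha1).congr (fun j => by ring)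
      · exact (tendsto_linear_ratio (3/2+(k:ℝ)) (1/2) ha2).congr (fun j => by ring)
      · exact (tendsto_linear_ratio (b+1+(k:ℝ)) b ha3).congr (fun j => by ring)
  have hconst : 1*1*1/(1*1)*AΓ*(1*1*1) = AΓ := by norm_num
  rw [hconst] at hΦ
  apply hΦ.congr'
  filter_upwards [eventually_ge_atTop 1] with j hj
  have hj0 : (0:ℝ) < (j:ℝ) := by exact_mod_cast hj
  have hF2 : ((j:ℝ) ^ (b+1+(k:ℝ)))
      = ((j:ℝ) ^ ((2:ℝ)+2*(k:ℝ)) * (j:ℝ) ^ ((1:ℝ)/2) * (j:ℝ) ^ b) / (j:ℝ) ^ ((3:ℝ)/2+(k:ℝ)) := by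
    rw [eq_div_iff (Real.rpow_pos_of_pos hj0 _).ne']
    rw [← Real.rpow_add hj0, ← Real.rpow_add hj0, ← Real.rpow_add hj0]
    congr 1
    ring
  have hne : ∀ y : ℝ, (j:ℝ) ^ y ≠ 0 := fun y => (Real.rpow_pos_of_pos hj0 y).ne'
  have hfne : (Nat.factorial j : ℝ) ≠ 0 := by positivity
  have hΓne : ∀ y : ℝ, 0 < y → Real.Gamma y ≠ 0 := fun y hy => (Real.Gamma_pos_of_pos hy).ne'
  show Rf (2+2*(k:ℝ)) j * Rf (1/2) j * Rf b j / (Rf (3/2+(k:ℝ)) j * Rf (b+1+(k:ℝ)) j) * AΓ *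
        (((j:ℝ)+1)/((2+2*(k:ℝ))+(j:ℝ)) * ((3/2+(k:ℝ)+(j:ℝ))/((1/2)+(j:ℝ)))
          * ((b+1+(k:ℝ)+(j:ℝ))/(b+(j:ℝ)))) = ((j:ℝ)+1) * gfun b k j
  unfold Rf gfun
  rw [hAΓ]
  rw [show (3/2+(k:ℝ)+(j:ℝ)) = (3/2+(k:ℝ))+(j:ℝ) by ring,
    show (b+1+(k:ℝ)+(j:ℝ)) = (b+1+(k:ℝ))+(j:ℝ) by ring]
  rw [hF2]
  exact abstract_id (poch (2+2*(k:ℝ)) j) (poch (1/2) j) (poch b j)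
    (poch (3/2+(k:ℝ)) j) (poch (b+1+(k:ℝ)) j)
    (Real.Gamma (2+2*(k:ℝ))) (Real.Gamma (1/2)) (Real.Gamma b)
    (Real.Gamma (3/2+(k:ℝ))) (Real.Gamma (b+1+(k:ℝ)))
    ((j:ℝ) ^ ((2:ℝ)+2*(k:ℝ))) ((j:ℝ) ^ ((1:ℝ)/2)) ((j:ℝ) ^ b) ((j:ℝ) ^ ((3:ℝ)/2+(k:ℝ)))
    (Nat.factorial j : ℝ) ((j:ℝ)+1)
    ((2+2*(k:ℝ))+(j:ℝ)) ((1/2)+(j:ℝ)) (b+(j:ℝ)) ((3/2+(k:ℝ))+(j:ℝ)) ((b+1+(k:ℝ))+(j:ℝ))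
    (hne _) (hne _) (hne _) (hne _) hfne
    (hΓne _ ha1) (hΓne _ ha2) (hΓne _ ha3) (hΓne _ hd1) (hΓne _ hd2)
    (by positivity) (by positivity) (by positivity) (by positivity) (by positivity)
    (poch_pos hd1 j).ne' (poch_pos hd2 j).ne'


lemma fact_dup (k : ℕ) :
    (Nat.factorial (2*k+1) : ℝ) = 4^k * poch (3/2) k * (Nat.factorial k : ℝ) := by
  induction k with
  | zero => simp [poch_zero]
  | succ k ih =>
      have h1 : 2*(k+1)+1 = ((2*k+1)+1)+1 := by ring
      rw [h1, Nat.factorial_succ, Nat.factorial_succ, Nat.factorial_succ k, poch_succ]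
      push_cast
      rw [ih]
      push_cast
      ring

lemma Gamma_two' : Real.Gamma 2 = 1 := by
  rw [show (2:ℝ) = 1+1 by norm_num, Real.Gamma_add_one one_ne_zero, Real.Gamma_one]
  norm_num

lemma AGamma_eq (b : ℝ) (hb1 : 1/2 < b) (k : ℕ) :
    Real.Gamma (3/2+(k:ℝ)) * Real.Gamma (b+1+(k:ℝ)) /
      (Real.Gamma (2+2*(k:ℝ)) * Real.Gamma (1/2) * Real.Gamma b)
    = (b/2) * (poch (3/2) k * poch (b+1) k) / (Nat.factorial (2*k+1) : ℝ) := by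
  have hb0 : (0:ℝ) < b := by linarith
  have h1 : Real.Gamma (3/2+(k:ℝ)) = poch (3/2) k * Real.Gamma (3/2) :=
    Gamma_poch (by norm_num) k
  have h2 : Real.Gamma (b+1+(k:ℝ)) = poch (b+1) k * Real.Gamma (b+1) :=
    Gamma_poch (by linarith) k
  have h3 : Real.Gamma (2+2*(k:ℝ)) = poch 2 (2*k) * Real.Gamma 2 := by
    have := Gamma_poch (show (0:ℝ) < 2 by norm_num) (2*k)
    rw [← this]
    congr 1
    push_cast
    ring
  have hG32 : Real.Gamma (3/2) = (1/2) * Real.Gamma (1/2) := by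
    rw [show (3/2:ℝ) = 1/2+1 by norm_num, Real.Gamma_add_one (by norm_num : (1/2:ℝ) ≠ 0)]
  have hGb1 : Real.Gamma (b+1) = b * Real.Gamma b := Real.Gamma_add_one hb0.ne'
  rw [h1, h2, h3, hG32, hGb1, Gamma_two', poch_two]
  have hf : (Nat.factorial (2*k+1) : ℝ) ≠ 0 := by positivity
  have hΓh : Real.Gamma (1/2) ≠ 0 := (Real.Gamma_pos_of_pos (by norm_num)).ne'
  have hΓb : Real.Gamma b ≠ 0 := (Real.Gamma_pos_of_pos hb0).ne'
  rw [show 2*k+1 = (2*k)+1 from rfl]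
  field_simp

lemma coeff_nonneg (b : ℝ) (hb1 : 1/2 < b) {ε : ℝ} (hε1 : ε ≤ 1) (k : ℕ) :
    0 ≤ coeffCeps b ε k := by
  unfold coeffCeps
  have h1 : (0:ℝ) ≤ poch (2-ε) (2*k) := poch_nonneg (by linarith) _
  have h2 : (0:ℝ) < poch (3/2) k := poch_pos (by norm_num) k
  have h3 : (0:ℝ) < poch (b+1) k := poch_pos (by linarith) k
  positivity

lemma coeff_le_one (b : ℝ) (hb1 : 1/2 < b) {ε : ℝ} (hε0 : 0 ≤ ε) (hε1 : ε ≤ 1) (k : ℕ) :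
    coeffCeps b ε k ≤ 1 := by
  unfold coeffCeps
  have h2 : (0:ℝ) < poch (3/2) k := poch_pos (by norm_num) k
  have h3 : (0:ℝ) < poch (b+1) k := poch_pos (by linarith) k
  have hD : (0:ℝ) < 4^k * poch (3/2) k * poch (b+1) k := by positivity
  rw [div_le_one hD]
  calc poch (2-ε) (2*k) ≤ poch 2 (2*k) := poch_le_poch (by linarith) (by linarith) _
    _ = (Nat.factorial (2*k+1) : ℝ) := poch_two (2*k)
    _ = 4^k * poch (3/2) k * (Nat.factorial k : ℝ) := fact_dup k
    _ ≤ 4^k * poch (3/2) k * poch (b+1) k := by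
        apply mul_le_mul_of_nonneg_left _ (by positivity)
        rw [← poch_one]
        exact poch_le_poch (by norm_num) (by linarith) k


lemma F_bound {m : ℝ} (hm : 2 ≤ m) {g : ℕ → ℝ} (hg0 : ∀ j, 0 ≤ g j)
    (hg1 : ∀ j : ℕ, ((j:ℝ)+1) * g j ≤ 1) {ε : ℝ} (hε0 : 0 < ε) (hε1 : ε ≤ 1) :
    0 ≤ ∑' j : ℕ, g j * ∏ i ∈ Finset.range j, (1 - ε/(m+(i:ℝ))) ∧
    ε * ∑' j : ℕ, g j * ∏ i ∈ Finset.range j, (1 - ε/(m+(i:ℝ))) ≤ 2*m := by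
  have hm0 : (0:ℝ) < m := by linarith
  set t : ℕ → ℝ := fun j => g j * ∏ i ∈ Finset.range j, (1 - ε/(m+(i:ℝ))) with ht
  have htnn : ∀ j, 0 ≤ t j := fun j => mul_nonneg (hg0 j) (Pi_pos hm hε0 hε1 j).le
  have hgle : ∀ j : ℕ, g j ≤ ((j:ℝ)+1)⁻¹ := by
    intro j
    have h1 : (0:ℝ) < (j:ℝ)+1 := by positivity
    rw [← mul_le_mul_iff_right₀ h1]
    calc ((j:ℝ)+1) * g j ≤ 1 := hg1 j
      _ = ((j:ℝ)+1) * ((j:ℝ)+1)⁻¹ := by field_simp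
  have ht_ub : ∀ j : ℕ, t j ≤ Real.exp (ε*Real.log m) * ((j:ℝ)+1)^(-1-ε) := by
    intro j
    rw [rpow_split _ _ (by positivity)]
    calc t j ≤ ((j:ℝ)+1)⁻¹ * (Real.exp (ε*Real.log m) * ((j:ℝ)+1)^(-ε)) := by
          apply mul_le_mul (hgle j) (Pi_ub hm hε0 hε1 j) (Pi_pos hm hε0 hε1 j).le (by positivity)
      _ = Real.exp (ε*Real.log m) * (((j:ℝ)+1)⁻¹ * ((j:ℝ)+1)^(-ε)) := by ring
  have hZsum := zsummable hε0
  have hBsum : Summable (fun j : ℕ => Real.exp (ε*Real.log m) * ((j:ℝ)+1)^(-1-ε)) :=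
    hZsum.mul_left _
  have htsum : Summable t := Summable.of_nonneg_of_le htnn ht_ub hBsum
  constructor
  · exact tsum_nonneg htnn
  · have h1 : ∑' j, t j ≤ Real.exp (ε*Real.log m) * ∑' j : ℕ, ((j:ℝ)+1)^(-1-ε) := by
      rw [← tsum_mul_left]
      exact Summable.tsum_le_tsum ht_ub htsum hBsum
    have hzb := zeta_bounds hε0
    have hexp : Real.exp (ε*Real.log m) ≤ m := by
      calc Real.exp (ε*Real.log m) ≤ Real.exp (Real.log m) := by
            apply Real.exp_le_exp.mpr
            nlinarith [Real.log_nonneg (by linarith : (1:ℝ) ≤ m)]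
        _ = m := Real.exp_log hm0
    calc ε * ∑' j, t j ≤ ε * (Real.exp (ε*Real.log m) * ∑' j : ℕ, ((j:ℝ)+1)^(-1-ε)) :=
          mul_le_mul_of_nonneg_left h1 hε0.le
      _ = Real.exp (ε*Real.log m) * (ε * ∑' j : ℕ, ((j:ℝ)+1)^(-1-ε)) := by ring
      _ ≤ Real.exp (ε*Real.log m) * (1+ε) := by
          apply mul_le_mul_of_nonneg_left hzb.2 (Real.exp_pos _).le
      _ ≤ m * 2 := by
          apply mul_le_mul hexp (by linarith) (by linarith) hm0.le
      _ = 2*m := by ring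


lemma hm2 (k : ℕ) : (2:ℝ) ≤ 2+2*(k:ℝ) := by
  have : (0:ℝ) ≤ (k:ℝ) := Nat.cast_nonneg k
  linarith

lemma tendsto_eps_F (b : ℝ) (hb1 : 1/2 < b) (hb2 : b < 3/2) (k : ℕ) :
    Tendsto (fun ε : ℝ => ε * seriesFeps b ε k) (nhdsWithin 0 (Set.Ioi 0))
      (𝓝 ((b/2) * (poch (3/2) k * poch (b+1) k) / (Nat.factorial (2*k+1) : ℝ))) := by
  have hA : Tendsto (fun j : ℕ => ((j:ℝ)+1) * gfun b k j) atTop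
      (𝓝 ((b/2) * (poch (3/2) k * poch (b+1) k) / (Nat.factorial (2*k+1) : ℝ))) := by
    have := tendsto_hA b hb1 hb2 k
    rwa [AGamma_eq b hb1 k] at this
  have := core (hm2 k) (gfun_nonneg b hb1 k) (gfun_h_le_one b hb1 hb2 k) hA
  apply this.congr
  intro ε
  rw [Feps_eq]

lemma coeff_tendsto (b : ℝ) (k : ℕ) :
    Tendsto (fun ε : ℝ => coeffCeps b ε k) (nhdsWithin 0 (Set.Ioi 0)) (𝓝 (coeffCeps b 0 k)) := by
  have hcont : Continuous (fun ε : ℝ => coeffCeps b ε k) := by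
    unfold coeffCeps
    apply Continuous.div_const
    simp only [poch_prod]
    apply continuous_finset_prod
    intro i _
    continuity
  exact (hcont.tendsto 0).mono_left nhdsWithin_le_nhds

lemma coeff_zero_val (b : ℝ) (hb1 : 1/2 < b) (k : ℕ) :
    coeffCeps b 0 k * ((b/2) * (poch (3/2) k * poch (b+1) k) / (Nat.factorial (2*k+1) : ℝ))
      = (b/2) * (1/4)^k := by
  unfold coeffCeps
  rw [show (2:ℝ) - 0 = 2 by norm_num, poch_two (2*k)]
  have h2 : (0:ℝ) < poch (3/2) k := poch_pos (by norm_num) k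
  have h3 : (0:ℝ) < poch (b+1) k := poch_pos (by linarith) k
  have hf : (0:ℝ) < (Nat.factorial (2*k+1) : ℝ) := by positivity
  rw [show 2*k+1 = (2*k)+1 from rfl] at hf ⊢
  field_simp
  ring_nf
  rw [← mul_pow]; norm_num

lemma tendsto_term (b X : ℝ) (hb1 : 1/2 < b) (hb2 : b < 3/2) (k : ℕ) :
    Tendsto (fun ε : ℝ => ε * (coeffCeps b ε k * seriesFeps b ε k * (-X)^k))
      (nhdsWithin 0 (Set.Ioi 0)) (𝓝 ((b/2) * (-X/4)^k)) := by
  have h1 := ((coeff_tendsto b k).mul_const ((-X)^k)).mul (tendsto_eps_F b hb1 hb2 k)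
  have hval : coeffCeps b 0 k * (-X)^k *
      ((b/2) * (poch (3/2) k * poch (b+1) k) / (Nat.factorial (2*k+1) : ℝ))
      = (b/2) * (-X/4)^k := by
    calc coeffCeps b 0 k * (-X)^k *
        ((b/2) * (poch (3/2) k * poch (b+1) k) / (Nat.factorial (2*k+1) : ℝ))
        = (coeffCeps b 0 k * ((b/2) * (poch (3/2) k * poch (b+1) k) / (Nat.factorial (2*k+1) : ℝ))) * (-X)^k := by
          ring
      _ = ((b/2) * (1/4)^k) * (-X)^k := by rw [coeff_zero_val b hb1 k]
      _ = (b/2) * ((1/4) * (-X))^k := by rw [mul_pow]; ring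
      _ = (b/2) * (-X/4)^k := by
          congr 1
          congr 1
          ring
  rw [hval] at h1
  apply h1.congr
  intro ε
  ring

theorem stmt_18 (b X : ℝ) (hb1 : 1 / 2 < b) (hb2 : b < 3 / 2)
    (hX0 : 0 ≤ X) (hX1 : X < 1) :
    Filter.Tendsto
      (fun ε : ℝ => ε * ∑' k : ℕ, coeffCeps b ε k * seriesFeps b ε k * (-X) ^ k)
      (nhdsWithin 0 (Set.Ioi 0)) (nhds (2 * b / (4 + X))) := by
  have hXlt : ‖X‖ < 1 := by rwa [Real.norm_eq_abs, abs_of_nonneg hX0]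
  -- bound function
  set bound : ℕ → ℝ := fun k => 4*((k:ℝ)+1)*X^k with hbound
  have hbsum : Summable bound := by
    have h1 : Summable (fun k : ℕ => (k:ℝ)^1 * X^k) :=
      summable_pow_mul_geometric_of_norm_lt_one 1 hXlt
    have h2 : Summable (fun k : ℕ => X^k) := summable_geometric_of_norm_lt_one hXlt
    have := (h1.mul_left 4).add (h2.mul_left 4)
    apply this.congr
    intro k
    simp [hbound]
    ring
  have hmain : Tendsto (fun ε : ℝ => ∑' k : ℕ, ε * (coeffCeps b ε k * seriesFeps b ε k * (-X)^k))
      (nhdsWithin 0 (Set.Ioi 0)) (𝓝 (∑' k : ℕ, (b/2) * (-X/4)^k)) := by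
    apply tendsto_tsum_of_dominated_convergence hbsum
    · intro k
      exact tendsto_term b X hb1 hb2 k
    · have hmem : Set.Ioc (0:ℝ) 1 ∈ nhdsWithin (0:ℝ) (Set.Ioi 0) :=
        Ioc_mem_nhdsGT_of_mem ⟨le_refl 0, zero_lt_one⟩
      filter_upwards [hmem] with ε hεmem
      obtain ⟨hε0, hε1⟩ := hεmem
      intro k
      have hFb := F_bound (hm2 k) (gfun_nonneg b hb1 k) (gfun_h_le_one b hb1 hb2 k) hε0 hε1
      have hF0 : 0 ≤ seriesFeps b ε k := by rw [Feps_eq]; exact hFb.1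
      have hFub : ε * seriesFeps b ε k ≤ 2*(2+2*(k:ℝ)) := by rw [Feps_eq]; exact hFb.2
      have hC0 := coeff_nonneg b hb1 hε1 k
      have hC1 := coeff_le_one b hb1 hε0.le hε1 k
      rw [Real.norm_eq_abs, abs_mul, abs_mul, abs_mul, abs_of_pos hε0,
        abs_of_nonneg hC0, abs_of_nonneg hF0, abs_pow, abs_neg, abs_of_nonneg hX0]
      calc ε * (coeffCeps b ε k * seriesFeps b ε k * X^k)
          = coeffCeps b ε k * (ε * seriesFeps b ε k) * X^k := by ring
        _ ≤ 1 * (2*(2+2*(k:ℝ))) * X^k := by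
            apply mul_le_mul_of_nonneg_right _ (by positivity)
            apply mul_le_mul hC1 hFub (by positivity) (by norm_num)
        _ = bound k := by rw [hbound]; ring
  have hsum_val : ∑' k : ℕ, (b/2) * (-X/4)^k = 2*b/(4+X) := by
    rw [tsum_mul_left, tsum_geometric_of_norm_lt_one (by
      rw [Real.norm_eq_abs, abs_div, abs_neg, abs_of_nonneg hX0, abs_of_nonneg (by norm_num : (0:ℝ) ≤ 4)]
      linarith)]
    have h4X : 4 + X ≠ 0 := by linarith
    field_simp
    ring_nf
    field_simp
    ring
  rw [hsum_val] at hmain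
  apply hmain.congr
  intro ε
  rw [tsum_mul_left]
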